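/- Let F : ℝ³ → ℝ satisfy (i) F(0) ≤ F(x) for all x, (ii) F(x) ≤ ‖x‖²/2 + F(0) for all x, and (iii) x ↦ ‖x‖²/2 − F(x) is convex. Then for every ξ ∈ ℝ³ with ‖ξ‖ < 1 and every k ∈ ℝ³ one has F(ξ − k) − F(ξ) + ‖k‖ ≥ (1 − ‖ξ‖)·‖k‖. -/

import Mathlib

theorem stmt6 (F : EuclideanSpace ℝ (Fin 3) → ℝ)
    (h1 : ∀ x, F 0 ≤ F x)
    (h2 : ∀ x, F x ≤ ‖x‖ ^ 2 / 2 + F 0)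
    (h3 : ConvexOn ℝ Set.univ fun x => ‖x‖ ^ 2 / 2 - F x) :
    ∀ ξ : EuclideanSpace ℝ (Fin 3), ‖ξ‖ < 1 →
      ∀ k : EuclideanSpace ℝ (Fin 3),
        F (ξ - k) - F ξ + ‖k‖ ≥ (1 - ‖ξ‖) * ‖k‖ := by
  intro ξ hξ k
  have key : -(‖ξ‖ * ‖k‖) ≤ F (ξ - k) - F ξ := by
    rcases eq_or_ne k 0 with rfl | hk
    · simp [h1 ξ]
    have hknorm : (0:ℝ) < ‖k‖ := norm_pos_iff.mpr hk
    rcases le_or_gt ‖ξ‖ (2 * ‖k‖) with hcase | hcase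
    · have h2ξ := h2 ξ
      have h1' := h1 (ξ - k)
      nlinarith [norm_nonneg ξ, norm_nonneg k]
    · set s : ℝ := ‖ξ‖ / ‖k‖ with hs
      have hs2 : 2 < s := (lt_div_iff₀ hknorm).mpr (by linarith)
      have hs0 : (0:ℝ) < s := by linarith
      have hb : (0:ℝ) ≤ 1/s := by positivity
      have ha : (0:ℝ) ≤ 1 - 1/s := by
        have : 1/s ≤ 1 := by
          rw [div_le_one hs0]; linarith
        linarith
      have hab : (1 - 1/s) + 1/s = 1 := by ring
      have hconv := h3.2 (Set.mem_univ ξ) (Set.mem_univ (ξ - s • k)) ha hb hab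
      have hpt : (1 - 1/s) • ξ + (1/s) • (ξ - s • k) = ξ - k := by
        match_scalars <;> field_simp <;> ring
      rw [hpt] at hconv
      simp only [smul_eq_mul] at hconv
      have e1 : ‖ξ - k‖^2 = ‖ξ‖^2 - 2*(inner ℝ ξ k : ℝ) + ‖k‖^2 := norm_sub_sq_real ξ k
      have e2 : ‖ξ - s • k‖^2 = ‖ξ‖^2 - 2*(s*(inner ℝ ξ k : ℝ)) + s^2*‖k‖^2 := by
        rw [norm_sub_sq_real, real_inner_smul_right, norm_smul, Real.norm_eq_abs,
          abs_of_pos hs0, mul_pow]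
      have hsk : s * ‖k‖ = ‖ξ‖ := by
        rw [hs]; field_simp
      have h2ξ := h2 ξ
      have h1' := h1 (ξ - s • k)
      rw [e1, e2] at hconv
      have hs0' : s ≠ 0 := ne_of_gt hs0
      have hconv' : s * ((‖ξ‖^2 - 2*(inner ℝ ξ k : ℝ) + ‖k‖^2)/2 - F (ξ - k)) ≤
          (s - 1) * (‖ξ‖ ^ 2 / 2 - F ξ) +
          ((‖ξ‖^2 - 2*(s*(inner ℝ ξ k : ℝ)) + s^2*‖k‖^2)/2 - F (ξ - s • k)) := by
        have := mul_le_mul_of_nonneg_left hconv (le_of_lt hs0)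
        calc s * ((‖ξ‖^2 - 2*(inner ℝ ξ k : ℝ) + ‖k‖^2)/2 - F (ξ - k))
            ≤ s * ((1 - 1/s) * (‖ξ‖ ^ 2 / 2 - F ξ) +
              1/s * ((‖ξ‖^2 - 2*(s*(inner ℝ ξ k : ℝ)) + s^2*‖k‖^2)/2 - F (ξ - s • k))) := this
          _ = (s - 1) * (‖ξ‖ ^ 2 / 2 - F ξ) +
              ((‖ξ‖^2 - 2*(s*(inner ℝ ξ k : ℝ)) + s^2*‖k‖^2)/2 - F (ξ - s • k)) := by
              field_simp
      nlinarith [hconv', hsk, hknorm, norm_nonneg ξ]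
  nlinarith [key]
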